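/- Let M be a binary matrix with species set S and character set C. Then M admits a persistent perfect phylogeny if and only if the General Character Compatibility instance on species S and characters C, in which each character c is the generalized character α_c with α_c(s) = {1} if M[s,c]=1 and α_c(s) = {0,2} if M[s,c]=0, and every character tree is the directed path 0 → 1 → 2, admits a solution. -/

import Mathlib

/-! Common definitions for persistent perfect phylogeny formalizations. -/

/-- `AncRel parent i j` : node `i` is an ancestor (or equal to) node `j`
in the rooted tree given by the parent function. -/
def AncRel (parent : ℕ → ℕ) (i j : ℕ) : Prop := ∃ k : ℕ, parent^[k] j = i

/-- A persistent perfect phylogeny (p-pp) for the binary matrix `M`.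
Nodes are `0, …, n-1`, the root is `0`, and each non-root node `i` has
parent `parent i < i`; the (unique) edge entering `i` is identified with `i`. -/
structure PPTree (S C : Type*) (M : S → C → Bool) where
  n : ℕ
  n_pos : 0 < n
  parent : ℕ → ℕ
  parent_lt : ∀ i, 0 < i → i < n → parent i < i
  label : ℕ → C → Bool
  root_label : ∀ c, label 0 c = false
  /-- for each character there are at most two edges across which its state changes -/
  changes_le_two : ∀ c : C, ∀ i j k : ℕ,
    (0 < i ∧ i < n ∧ label (parent i) c ≠ label i c) →
    (0 < j ∧ j < n ∧ label (parent j) c ≠ label j c) →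
    (0 < k ∧ k < n ∧ label (parent k) c ≠ label k c) →
    i = j ∨ i = k ∨ j = k
  /-- two change edges of the same character lie on one root-to-leaf path,
  the higher one being the gain `c⁺` (0→1) and the lower one the loss `c⁻` (1→0) -/
  changes_on_path : ∀ c : C, ∀ i j : ℕ,
    (0 < i ∧ i < n ∧ label (parent i) c ≠ label i c) →
    (0 < j ∧ j < n ∧ label (parent j) c ≠ label j c) →
    i ≠ j →
    (AncRel parent i j ∧ label (parent i) c = false ∧ label i c = true ∧
      label (parent j) c = true ∧ label j c = false) ∨
    (AncRel parent j i ∧ label (parent j) c = false ∧ label j c = true ∧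
      label (parent i) c = true ∧ label i c = false)
  /-- if a character changes on exactly one edge, the change is a gain (0→1) -/
  single_change_gain : ∀ c : C, ∀ i : ℕ,
    (0 < i ∧ i < n ∧ label (parent i) c ≠ label i c) →
    (∀ j : ℕ, (0 < j ∧ j < n ∧ label (parent j) c ≠ label j c) → j = i) →
    (label (parent i) c = false ∧ label i c = true)
  /-- each row of `M` labels exactly one node of the tree -/
  rows_label : ∀ s : S, ∃! x : ℕ, x < n ∧ ∀ c, label x c = M s c

/-- Character `c` is persistent in the node `x`: the path from the root to `x`
contains both an edge labeled `c⁺` and an edge labeled `c⁻`. -/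
def PPTree.persistentAt {S C : Type*} {M : S → C → Bool} (T : PPTree S C M)
    (x : ℕ) (c : C) : Prop :=
  (∃ i, 0 < i ∧ i < T.n ∧ AncRel T.parent i x ∧
    T.label (T.parent i) c = false ∧ T.label i c = true) ∧
  (∃ j, 0 < j ∧ j < T.n ∧ AncRel T.parent j x ∧
    T.label (T.parent j) c = true ∧ T.label j c = false)

/-- A p-pp tree is consistent with the constraint set `E` if, for every
`(s,c) ∈ E`, the character `c` is not persistent in the species `s`. -/
def PPTree.consistent {S C : Type*} {M : S → C → Bool} (T : PPTree S C M)
    (E : Set (S × C)) : Prop :=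
  ∀ p ∈ E, ∀ x : ℕ, x < T.n → (∀ c, T.label x c = M p.1 c) →
    ¬ T.persistentAt x p.2

/-- Two (distinct) characters are in conflict when all four configurations
`(0,0), (0,1), (1,0), (1,1)` occur among the species. -/
def Conflicting {S C : Type*} (M : S → C → Bool) (c₁ c₂ : C) : Prop :=
  c₁ ≠ c₂ ∧
  (∃ s, M s c₁ = false ∧ M s c₂ = false) ∧
  (∃ s, M s c₁ = false ∧ M s c₂ = true) ∧
  (∃ s, M s c₁ = true ∧ M s c₂ = false) ∧
  (∃ s, M s c₁ = true ∧ M s c₂ = true)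

/-- The conflict graph of `M` is empty: no two characters are in conflict. -/
def EmptyConflictGraph {S C : Type*} (M : S → C → Bool) : Prop :=
  ∀ c₁ c₂ : C, ¬ Conflicting M c₁ c₂

/-- The column of a character, as a set of species. -/
def ColSet {S C : Type*} (M : S → C → Bool) (c : C) : Set S := {s | M s c = true}

/-- Column `c⁺` of the completion of the extended matrix of `(M,E)` determined by
the choice function `f` (the pair `(?,?)` of species `s` and character `c` is
completed to `(1,1)` iff `f s c` holds). -/
def ColPlus {S C : Type*} (M : S → C → Bool) (E : Set (S × C))
    (f : S → C → Prop) (c : C) : Set S :=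
  {s | M s c = true ∨ ((s, c) ∉ E ∧ M s c = false ∧ f s c)}

/-- Column `c⁻` of the completion of the extended matrix of `(M,E)` determined by `f`. -/
def ColMinus {S C : Type*} (M : S → C → Bool) (E : Set (S × C))
    (f : S → C → Prop) (c : C) : Set S :=
  {s | (s, c) ∉ E ∧ M s c = false ∧ f s c}

/-- The column of a signed character (`(c, true)` is `c⁺`, `(c, false)` is `c⁻`). -/
def ColOf {S C : Type*} (M : S → C → Bool) (E : Set (S × C))
    (f : S → C → Prop) : C × Bool → Set S :=
  fun p => if p.2 then ColPlus M E f p.1 else ColMinus M E f p.1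

/-- Two sets are laminar: disjoint or one contains the other. -/
def LaminarPair {S : Type*} (X Y : Set S) : Prop := X ∩ Y = ∅ ∨ X ⊆ Y ∨ Y ⊆ X

/-- The completion of the extended matrix of `(M,E)` given by `f` has pairwise
laminar columns, i.e. it admits a rooted (directed) perfect phylogeny. -/
def LaminarCompletion {S C : Type*} (M : S → C → Bool) (E : Set (S × C))
    (f : S → C → Prop) : Prop :=
  ∀ p q : C × Bool, LaminarPair (ColOf M E f p) (ColOf M E f q)

/-- The state of a character in a red-black graph. -/
inductive CharState : Type
  | inactive : CharState
  | active : CharState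
  | free : CharState
deriving DecidableEq

/-- A red-black graph: an edge-bicolored bipartite graph on species and
characters, together with a state for each character and a set of forbidden
(species, character) pairs. -/
structure RBGraph (S C : Type*) where
  black : S → C → Prop
  red : S → C → Prop
  charState : C → CharState
  forbidden : Set (S × C)

/-- The underlying simple graph of a red-black graph (edges of either color). -/
def RBGraph.graph {S C : Type*} (G : RBGraph S C) : SimpleGraph (S ⊕ C) where
  Adj v w :=
    (∃ s c, v = Sum.inl s ∧ w = Sum.inr c ∧ (G.black s c ∨ G.red s c)) ∨
    (∃ s c, w = Sum.inl s ∧ v = Sum.inr c ∧ (G.black s c ∨ G.red s c))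
  symm := ⟨fun v w h => Or.symm h⟩
  loopless := by
    exact ⟨by rintro v (⟨s, c, h₁, h₂, -⟩ | ⟨s, c, h₁, h₂, -⟩) <;> subst h₁ <;> simp at h₂⟩

/-- The subgraph of a red-black graph formed by the red edges only. -/
def RBGraph.redGraph {S C : Type*} (G : RBGraph S C) : SimpleGraph (S ⊕ C) where
  Adj v w :=
    (∃ s c, v = Sum.inl s ∧ w = Sum.inr c ∧ G.red s c) ∨
    (∃ s c, w = Sum.inl s ∧ v = Sum.inr c ∧ G.red s c)
  symm := ⟨fun v w h => Or.symm h⟩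
  loopless := by
    exact ⟨by rintro v (⟨s, c, h₁, h₂, -⟩ | ⟨s, c, h₁, h₂, -⟩) <;> subst h₁ <;> simp at h₂⟩

/-- The species `s` belongs to the connected component `𝒞(c)` of character `c`. -/
def RBGraph.reach {S C : Type*} (G : RBGraph S C) (c : C) (s : S) : Prop :=
  G.graph.Reachable (Sum.inr c) (Sum.inl s)

/-- The realization of character `c` is possible in `G`. -/
def RealizePossible {S C : Type*} (G : RBGraph S C) (c : C) : Prop :=
  match G.charState c with
  | CharState.inactive => ∀ s, G.reach c s → (s, c) ∉ G.forbidden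
  | CharState.active => ∀ s, G.reach c s → G.red s c
  | CharState.free => False

/-- The realization of character `c` in the red-black graph `G`.
If `c` is inactive: add a red edge `{s,c}` for every species `s ∈ 𝒞(c)` not
adjacent to `c`, delete all black edges incident to `c`, forbid `(s,c)` for all
`s ∉ 𝒞(c)`, and make `c` active.  If `c` is active: delete all red edges
incident to `c` and make `c` free. -/
def realize {S C : Type*} [DecidableEq C] (G : RBGraph S C) (c : C) : RBGraph S C :=
  match G.charState c with
  | CharState.inactive =>
    { black := fun s c' => G.black s c' ∧ c' ≠ c
      red := fun s c' =>
        if c' = c then G.red s c ∨ (G.reach c s ∧ ¬ G.black s c ∧ ¬ G.red s c)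
        else G.red s c'
      charState := fun c' => if c' = c then CharState.active else G.charState c'
      forbidden := G.forbidden ∪ {p | p.2 = c ∧ ¬ G.reach c p.1} }
  | CharState.active =>
    { black := G.black
      red := fun s c' => G.red s c' ∧ c' ≠ c
      charState := fun c' => if c' = c then CharState.free else G.charState c'
      forbidden := G.forbidden }
  | CharState.free => G

/-- Realize a sequence of characters, in order. -/
def realizeList {S C : Type*} [DecidableEq C] (G : RBGraph S C) : List C → RBGraph S C
  | [] => G
  | c :: l => realizeList (realize G c) l

/-- All realizations of the sequence, performed in order, are possible. -/
def AllPossible {S C : Type*} [DecidableEq C] (G : RBGraph S C) : List C → Prop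
  | [] => True
  | c :: l => RealizePossible G c ∧ AllPossible (realize G c) l

/-- The initial red-black graph of the constrained matrix `(M, E)`:
a black edge `{s,c}` iff `M s c = 1`, all characters inactive, forbidden set `E`. -/
def initRB {S C : Type*} (M : S → C → Bool) (E : Set (S × C)) : RBGraph S C :=
  { black := fun s c => M s c = true
    red := fun _ _ => False
    charState := fun _ => CharState.inactive
    forbidden := E }

/-- The red-black graph has no edges at all. -/
def Edgeless {S C : Type*} (G : RBGraph S C) : Prop :=
  ∀ (s : S) (c : C), ¬ G.black s c ∧ ¬ G.red s c

/-- A proper sequence of signed characters: each signed character occurs at most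
once, and `c⁻` occurs only after the corresponding `c⁺`. -/
def ProperSigned {C : Type*} [DecidableEq C] (R : List (C × Bool)) : Prop :=
  (∀ σ : C × Bool, R.count σ ≤ 1) ∧
  (∀ c : C, (c, false) ∈ R →
    ∃ i j : Fin R.length, (i : ℕ) < (j : ℕ) ∧ R.get i = (c, true) ∧ R.get j = (c, false))

/-- A successful c-reduction of the red-black graph of `(M, E)`: a proper signed
sequence containing `c⁺` for every character, all of whose realizations are
possible in order, and whose final red-black graph has no edges. -/
def SuccessfulCReduction {S C : Type*} [DecidableEq C] (M : S → C → Bool)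
    (E : Set (S × C)) (R : List (C × Bool)) : Prop :=
  ProperSigned R ∧ (∀ c : C, (c, true) ∈ R) ∧
  AllPossible (initRB M E) (R.map Prod.fst) ∧
  Edgeless (realizeList (initRB M E) (R.map Prod.fst))

/-- The canonical completion of the extended matrix of `(M,E)` associated with a
successful c-reduction `R`: at the first realization of each character `c`, the
pair of species `s` and character `c` is completed to `(1,1)` iff `s ∈ 𝒞(c)` at
that moment. -/
def canonComp {S C : Type*} [DecidableEq C] (M : S → C → Bool) (E : Set (S × C))
    (R : List (C × Bool)) : S → C → Prop :=
  fun s c =>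
    (realizeList (initRB M E)
      ((R.takeWhile (fun p => decide (p ≠ (c, true)))).map Prod.fst)).reach c s

/-- `L` is a label sequence of node `x` of the p-pp tree `T`: it lists, without
repetition and in root-to-`x` order, exactly the signed characters labeling the
edges on the path from the root to `x` (`(c, true)` stands for `c⁺`,
`(c, false)` for `c⁻`). -/
def IsLabelSeq {S C : Type*} {M : S → C → Bool} (T : PPTree S C M) (x : ℕ)
    (L : List (C × Bool)) : Prop :=
  L.Nodup ∧
  (∀ σ : C × Bool, σ ∈ L ↔ ∃ i, 0 < i ∧ i < T.n ∧ AncRel T.parent i x ∧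
    T.label (T.parent i) σ.1 = (!σ.2) ∧ T.label i σ.1 = σ.2) ∧
  (∀ p q : Fin L.length, (p : ℕ) < (q : ℕ) → ∀ i j : ℕ,
    (0 < i ∧ i < T.n ∧ AncRel T.parent i x ∧
      T.label (T.parent i) (L.get p).1 = (!(L.get p).2) ∧
      T.label i (L.get p).1 = (L.get p).2) →
    (0 < j ∧ j < T.n ∧ AncRel T.parent j x ∧
      T.label (T.parent j) (L.get q).1 = (!(L.get q).2) ∧
      T.label j (L.get q).1 = (L.get q).2) →
    AncRel T.parent i j)

/-- A solution of a General Character Compatibility instance (with all character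
trees equal to the directed path `0 → 1 → 2`). -/
structure GCCSolution (S C : Type*) (α : C → S → Set (Fin 3)) where
  n : ℕ
  n_pos : 0 < n
  parent : ℕ → ℕ
  parent_lt : ∀ i, 0 < i → i < n → parent i < i
  st : ℕ → C → Fin 3
  /-- every species has a node whose states belong to the prescribed sets -/
  species_node : ∀ s : S, ∃ v : ℕ, v < n ∧ ∀ c : C, st v c ∈ α c s
  /-- for each character and state, the nodes carrying that state induce a
  connected subtree: any two of them are joined by a path inside the set,
  through a common ancestor carrying the same state -/
  state_connected : ∀ (c : C) (q : Fin 3) (u v : ℕ), u < n → v < n →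
    st u c = q → st v c = q →
    ∃ r : ℕ, r < n ∧ st r c = q ∧ AncRel parent r u ∧ AncRel parent r v ∧
      (∀ w : ℕ, AncRel parent r w → AncRel parent w u → st w c = q) ∧
      (∀ w : ℕ, AncRel parent r w → AncRel parent w v → st w c = q)
  /-- along each edge a state is unchanged or moves one step along `0 → 1 → 2` -/
  edge_ok : ∀ (c : C) (i : ℕ), 0 < i → i < n →
    st (parent i) c = st i c ∨
    (st (parent i) c = 0 ∧ st i c = 1) ∨
    (st (parent i) c = 1 ∧ st i c = 2)





section Chain
variable (p : ℕ → ℕ)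

lemma anc_rfl (v : ℕ) : AncRel p v v := ⟨0, rfl⟩

lemma anc_parent (v : ℕ) : AncRel p (p v) v := ⟨1, rfl⟩

lemma anc_trans {a b c : ℕ} : AncRel p a b → AncRel p b c → AncRel p a c := by
  rintro ⟨k1, h1⟩ ⟨k2, h2⟩
  exact ⟨k1 + k2, by rw [Function.iterate_add_apply, h2, h1]⟩

lemma anc_of_anc_parent {a b : ℕ} : AncRel p a (p b) → AncRel p a b := by
  rintro ⟨k, h⟩
  exact ⟨k + 1, by rw [Function.iterate_succ_apply]; exact h⟩

lemma anc_le (hle : ∀ v, p v ≤ v) {a b : ℕ} : AncRel p a b → a ≤ b := by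
  rintro ⟨k, h⟩
  subst h
  induction k with
  | zero => simp
  | succ k ih => rw [Function.iterate_succ_apply']; exact le_trans (hle _) ih

lemma anc_zero (hlt : ∀ v, 0 < v → p v < v) (v : ℕ) : AncRel p 0 v := by
  induction v using Nat.strong_induction_on with
  | _ v ih =>
    rcases Nat.eq_zero_or_pos v with h | h
    · subst h; exact anc_rfl p 0
    · exact anc_trans p (ih (p v) (hlt v h)) (anc_parent p v)

lemma anc_bound {n : ℕ} (hb : ∀ v, v < n → p v < n) {a b : ℕ} (hbn : b < n)
    (h : AncRel p a b) : a < n := by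
  obtain ⟨k, h⟩ := h
  subst h
  induction k with
  | zero => simpa
  | succ k ih => rw [Function.iterate_succ_apply']; exact hb _ ih

def cntA (hlt : ∀ v, 0 < v → p v < v) (g : ℕ → Bool) : ℕ → ℕ
  | 0 => 0
  | v+1 => cntA hlt g (p (v+1)) + (if g (p (v+1)) = g (v+1) then 0 else 1)
  termination_by v => v
  decreasing_by exact hlt _ (Nat.succ_pos v)

variable (hlt : ∀ v, 0 < v → p v < v) (g : ℕ → Bool)

lemma cntA_zero : cntA p hlt g 0 = 0 := by simp [cntA]

lemma cntA_succ {v : ℕ} (hv : 0 < v) :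
    cntA p hlt g v = cntA p hlt g (p v) + (if g (p v) = g v then 0 else 1) := by
  cases v with
  | zero => omega
  | succ v => rw [cntA]

lemma cntA_parent_le (h0 : p 0 = 0) (v : ℕ) : cntA p hlt g (p v) ≤ cntA p hlt g v := by
  rcases Nat.eq_zero_or_pos v with h | h
  · subst h; rw [h0]
  · rw [cntA_succ p hlt g h]; omega

lemma cntA_anc_le (h0 : p 0 = 0) {a b : ℕ} (h : AncRel p a b) :
    cntA p hlt g a ≤ cntA p hlt g b := by
  obtain ⟨k, h⟩ := h
  subst h
  induction k with
  | zero => simp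
  | succ k ih =>
    rw [Function.iterate_succ_apply']
    exact le_trans (cntA_parent_le p hlt g h0 _) ih

lemma cntA_parity (h0 : p 0 = 0) (hg0 : g 0 = false) (v : ℕ) :
    g v = true ↔ cntA p hlt g v % 2 = 1 := by
  induction v using Nat.strong_induction_on with
  | _ v ih =>
    rcases Nat.eq_zero_or_pos v with h | h
    · subst h; rw [hg0, cntA_zero]; simp
    · rw [cntA_succ p hlt g h]
      have := ih (p v) (hlt v h)
      by_cases hgv : g (p v) = g v
      · rw [if_pos hgv, Nat.add_zero]; rw [hgv] at this; exact this
      · rw [if_neg hgv]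
        rcases Bool.eq_false_or_eq_true (g v) with hv | hv
        · have hpv : g (p v) = false := by
            rcases Bool.eq_false_or_eq_true (g (p v)) with h' | h'
            · exact absurd (h'.trans hv.symm) hgv
            · exact h'
          rw [hpv] at this
          simp only [Bool.false_eq_true, false_iff] at this
          rw [hv]; simp only [true_iff]; omega
        · have hpv : g (p v) = true := by
            rcases Bool.eq_false_or_eq_true (g (p v)) with h' | h'
            · exact h'
            · exact absurd (h'.trans hv.symm) hgv
          have h1 : cntA p hlt g (p v) % 2 = 1 := this.mp hpv
          rw [hv]; simp only [Bool.false_eq_true, false_iff]; omega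

lemma cntA_exists_change (v : ℕ) :
    ∀ t, 0 < t → t ≤ cntA p hlt g v →
      ∃ i, 0 < i ∧ AncRel p i v ∧ cntA p hlt g i = t ∧ g (p i) ≠ g i := by
  induction v using Nat.strong_induction_on with
  | _ v ih =>
    intro t ht htle
    rcases Nat.eq_zero_or_pos v with h | h
    · subst h; rw [cntA_zero] at htle; omega
    · rw [cntA_succ p hlt g h] at htle
      by_cases hc : t ≤ cntA p hlt g (p v)
      · obtain ⟨i, h1, h2, h3, h4⟩ := ih (p v) (hlt v h) t ht hc
        exact ⟨i, h1, anc_trans p h2 (anc_parent p v), h3, h4⟩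
      · have hg : ¬ (g (p v) = g v) := by
          by_contra hgg
          rw [if_pos hgg] at htle; omega
        refine ⟨v, h, anc_rfl p v, ?_, hg⟩
        rw [if_neg hg] at htle
        rw [cntA_succ p hlt g h, if_neg hg]
        omega

end Chain

section Fwd
variable {S C : Type*} {M : S → C → Bool}

theorem fwdThm [Fintype S] [Fintype C] (M : S → C → Bool) (T : PPTree S C M) :
    Nonempty (GCCSolution S C (fun c s =>
      {q : Fin 3 | (M s c = true ∧ q = 1) ∨
        (M s c = false ∧ (q = 0 ∨ q = 2))})) := by
  classical
  set n := T.n with hn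
  set p : ℕ → ℕ := fun v => if 0 < v ∧ v < n then T.parent v else 0 with hp
  have hlt : ∀ v, 0 < v → p v < v := by
    intro v hv
    by_cases h : 0 < v ∧ v < n
    · simp only [hp, if_pos h]; exact T.parent_lt v h.1 h.2
    · simp only [hp, if_neg h]; exact hv
  have h0 : p 0 = 0 := by simp [hp]
  have hle : ∀ v, p v ≤ v := by
    intro v
    rcases Nat.eq_zero_or_pos v with h | h
    · subst h; rw [h0]
    · exact le_of_lt (hlt v h)
  have hb : ∀ v, v < n → p v < n := by
    intro v hv
    rcases Nat.eq_zero_or_pos v with h | h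
    · subst h; rw [h0]; exact T.n_pos
    · exact lt_trans (hlt v h) hv
  have hpe : ∀ v, 0 < v → v < n → p v = T.parent v := by
    intro v h1 h2; simp [hp, h1, h2]
  -- per-character count
  set cnt : C → ℕ → ℕ := fun c v => cntA p hlt (fun w => T.label w c) v with hcnt
  have exch : ∀ c (v t : ℕ), 0 < t → t ≤ cnt c v →
      ∃ i, 0 < i ∧ AncRel p i v ∧ cnt c i = t ∧ T.label (p i) c ≠ T.label i c :=
    fun c v t ht h => cntA_exists_change p hlt (fun w => T.label w c) v t ht h
  have cnt_le_two : ∀ c, ∀ v, v < n → cnt c v ≤ 2 := by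
    intro c v hv
    by_contra hcon
    push_neg at hcon
    obtain ⟨i1, hi1, ha1, hc1, hg1⟩ := exch c v 1 (by omega) (by omega)
    obtain ⟨i2, hi2, ha2, hc2, hg2⟩ := exch c v 2 (by omega) (by omega)
    obtain ⟨i3, hi3, ha3, hc3, hg3⟩ := exch c v 3 (by omega) (by omega)
    have hn1 : i1 < n := anc_bound p hb hv ha1
    have hn2 : i2 < n := anc_bound p hb hv ha2
    have hn3 : i3 < n := anc_bound p hb hv ha3
    have e1 : T.label (T.parent i1) c ≠ T.label i1 c := by rw [← hpe i1 hi1 hn1]; exact hg1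
    have e2 : T.label (T.parent i2) c ≠ T.label i2 c := by rw [← hpe i2 hi2 hn2]; exact hg2
    have e3 : T.label (T.parent i3) c ≠ T.label i3 c := by rw [← hpe i3 hi3 hn3]; exact hg3
    have := T.changes_le_two c i1 i2 i3 ⟨hi1, hn1, e1⟩ ⟨hi2, hn2, e2⟩ ⟨hi3, hn3, e3⟩
    rcases this with h | h | h
    · rw [h] at hc1; omega
    · rw [h] at hc1; omega
    · rw [h] at hc2; omega
  have parity : ∀ c v, T.label v c = true ↔ cnt c v % 2 = 1 := by
    intro c v
    exact cntA_parity p hlt (fun w => T.label w c) h0 (T.root_label c) v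
  -- the state function
  set st : ℕ → C → Fin 3 := fun v c => ⟨min (cnt c v) 2, by omega⟩ with hst
  have st_val : ∀ v c, v < n → (st v c : ℕ) = cnt c v := by
    intro v c hv
    simp only [hst]
    exact min_eq_left (cnt_le_two c v hv)
  -- uniqueness of change nodes at given count level
  have change_eq : ∀ c (i j : ℕ), i < n → j < n →
      0 < i → 0 < j → T.label (p i) c ≠ T.label i c → T.label (p j) c ≠ T.label j c →
      cnt c i = cnt c j → i = j := by
    intro c i j hi hj h0i h0j hci hcj hcc
    by_contra hne
    have e1 : T.label (T.parent i) c ≠ T.label i c := by rw [← hpe i h0i hi]; exact hci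
    have e2 : T.label (T.parent j) c ≠ T.label j c := by rw [← hpe j h0j hj]; exact hcj
    have hpar : cnt c i % 2 = cnt c j % 2 := by rw [hcc]
    have hi1 := (parity c i)
    have hj1 := (parity c j)
    rcases T.changes_on_path c i j ⟨h0i, hi, e1⟩ ⟨h0j, hj, e2⟩ hne with
      ⟨_, _, h2, _, h4⟩ | ⟨_, _, h2, _, h4⟩
    · rw [h2] at hi1; rw [h4] at hj1
      simp only [true_iff] at hi1
      simp only [Bool.false_eq_true, false_iff] at hj1
      omega
    · rw [h2] at hj1; rw [h4] at hi1
      simp only [true_iff] at hj1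
      simp only [Bool.false_eq_true, false_iff] at hi1
      omega
  refine ⟨{ n := n, n_pos := T.n_pos, parent := p,
            parent_lt := fun i h1 _ => hlt i h1,
            st := st, species_node := ?_, state_connected := ?_, edge_ok := ?_ }⟩
  · -- species_node
    intro s
    obtain ⟨x, ⟨hxn, hxl⟩, -⟩ := T.rows_label s
    refine ⟨x, hxn, ?_⟩
    intro c
    have h2 := cnt_le_two c x hxn
    have hpar := parity c x
    rcases hMc : M s c with hM | hM
    · -- M s c = false
      right
      refine ⟨rfl, ?_⟩
      have hlab : T.label x c = false := by rw [hxl c, hMc]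
      rw [hlab] at hpar
      simp only [Bool.false_eq_true, false_iff] at hpar
      have : cnt c x = 0 ∨ cnt c x = 2 := by omega
      rcases this with h | h
      · left; apply Fin.ext; rw [st_val x c hxn, h]; rfl
      · right; apply Fin.ext; rw [st_val x c hxn, h]; rfl
    · -- M s c = true
      left
      refine ⟨rfl, ?_⟩
      have hlab : T.label x c = true := by rw [hxl c, hMc]
      rw [hlab] at hpar
      simp only [true_iff] at hpar
      have : cnt c x = 1 := by omega
      apply Fin.ext; rw [st_val x c hxn, this]; rfl
  · -- state_connected
    intro c q u v hu hv hsu hsv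
    have hcu : cnt c u = (q : ℕ) := by rw [← st_val u c hu, hsu]
    have hcv : cnt c v = (q : ℕ) := by rw [← st_val v c hv, hsv]
    have hq3 : (q : ℕ) < 3 := q.isLt
    have hmono : ∀ a b : ℕ, AncRel p a b → cnt c a ≤ cnt c b := by
      intro a b hab
      exact cntA_anc_le p hlt (fun w => T.label w c) h0 hab
    have key : ∃ r, r < n ∧ cnt c r = (q : ℕ) ∧ AncRel p r u ∧ AncRel p r v := by
      have hq3' : (q : ℕ) = 0 ∨ (q : ℕ) = 1 ∨ (q : ℕ) = 2 := by omega
      rcases hq3' with h | h | h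
      · exact ⟨0, T.n_pos, by rw [h]; exact cntA_zero p hlt _,
          anc_zero p hlt u, anc_zero p hlt v⟩
      · obtain ⟨i, hi0, hia, hic, hig⟩ := exch c u 1 (by omega) (by omega)
        obtain ⟨j, hj0, hja, hjc, hjg⟩ := exch c v 1 (by omega) (by omega)
        have hin : i < n := anc_bound p hb hu hia
        have hjn : j < n := anc_bound p hb hv hja
        have : i = j := change_eq c i j hin hjn hi0 hj0 hig hjg (by omega)
        subst this
        exact ⟨i, hin, by omega, hia, hja⟩
      · obtain ⟨i, hi0, hia, hic, hig⟩ := exch c u 2 (by omega) (by omega)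
        obtain ⟨j, hj0, hja, hjc, hjg⟩ := exch c v 2 (by omega) (by omega)
        have hin : i < n := anc_bound p hb hu hia
        have hjn : j < n := anc_bound p hb hv hja
        have : i = j := change_eq c i j hin hjn hi0 hj0 hig hjg (by omega)
        subst this
        exact ⟨i, hin, by omega, hia, hja⟩
    obtain ⟨r, hrn, hrc, hru, hrv⟩ := key
    have stw : ∀ w t, t < n → cnt c t = (q : ℕ) → AncRel p r w → AncRel p w t → st w c = q := by
      intro w t htn hct hrw hwt
      have hwn : w < n := anc_bound p hb htn hwt
      have h1 : cnt c r ≤ cnt c w := hmono r w hrw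
      have h2 : cnt c w ≤ cnt c t := hmono w t hwt
      apply Fin.ext
      rw [st_val w c hwn]
      omega
    refine ⟨r, hrn, ?_, hru, hrv, fun w hrw hwu => stw w u hu hcu hrw hwu,
      fun w hrw hwv => stw w v hv hcv hrw hwv⟩
    apply Fin.ext
    rw [st_val r c hrn, hrc]
  · -- edge_ok
    intro c i h0i hin
    have hpn : p i < n := hb i hin
    have hstep : cnt c i = cnt c (p i) + (if T.label (p i) c = T.label i c then 0 else 1) :=
      cntA_succ p hlt (fun w => T.label w c) h0i
    have h2i : cnt c i ≤ 2 := cnt_le_two c i hin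
    have h2p : cnt c (p i) ≤ 2 := cnt_le_two c (p i) hpn
    have hvi : (st i c : ℕ) = cnt c i := st_val i c hin
    have hvp : (st (p i) c : ℕ) = cnt c (p i) := st_val (p i) c hpn
    by_cases hch : (T.label (p i) c) = (T.label i c)
    · left
      apply Fin.ext
      rw [hvi, hvp, hstep, if_pos hch]
      omega
    · have : cnt c i = cnt c (p i) + 1 := by rw [hstep, if_neg hch]
      have hcc : cnt c (p i) = 0 ∨ cnt c (p i) = 1 ∨ cnt c (p i) = 2 := by omega
      rcases hcc with h | h | h
      · right; left
        constructor <;> apply Fin.ext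
        · rw [hvp, h]; rfl
        · rw [hvi]; omega
      · right; right
        constructor <;> apply Fin.ext
        · rw [hvp, h]; rfl
        · rw [hvi]; omega
      · omega

end Fwd

section Bwd
variable {S C : Type*}

theorem bwdThm [Fintype S] [Fintype C] (M : S → C → Bool)
    (G : GCCSolution S C (fun c s =>
      {q : Fin 3 | (M s c = true ∧ q = 1) ∨
        (M s c = false ∧ (q = 0 ∨ q = 2))})) :
    Nonempty (PPTree S C M) := by
  classical
  set n := G.n with hn
  set N := G.n + 1 with hN
  -- normalized old parent
  set q0 : ℕ → ℕ := fun v => if 0 < v ∧ v < n then G.parent v else 0 with hq0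
  have q0lt : ∀ v, 0 < v → q0 v < v := by
    intro v hv
    by_cases h : 0 < v ∧ v < n
    · simp only [hq0, if_pos h]; exact G.parent_lt v h.1 h.2
    · simp only [hq0, if_neg h]; exact hv
  have q0b : ∀ v, v < n → q0 v < n := by
    intro v hv
    rcases Nat.eq_zero_or_pos v with h | h
    · subst h; simpa [hq0] using (G.n_pos)
    · exact lt_trans (q0lt v h) hv
  -- old state monotone along real chains
  have oldstep : ∀ (c : C) (w : ℕ), w < n → (G.st (q0 w) c : ℕ) ≤ (G.st w c : ℕ) := by
    intro c w hw
    rcases Nat.eq_zero_or_pos w with h | h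
    · subst h; simp [hq0]
    · have hq : q0 w = G.parent w := by simp [hq0, h, hw]
      rw [hq]
      rcases G.edge_ok c w h hw with he | ⟨h1, h2⟩ | ⟨h1, h2⟩
      · rw [he]
      · rw [h1, h2]; decide
      · rw [h1, h2]; decide
  have oldmono : ∀ (c : C) (v : ℕ), v < n → (G.st 0 c : ℕ) ≤ (G.st v c : ℕ) := by
    intro c v hv
    obtain ⟨k, hk⟩ := anc_zero q0 q0lt v
    have : ∀ k, (G.st (q0^[k] v) c : ℕ) ≤ (G.st v c : ℕ) ∧ q0^[k] v < n := by
      intro k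
      induction k with
      | zero => exact ⟨le_refl _, hv⟩
      | succ k ih =>
        rw [Function.iterate_succ_apply']
        exact ⟨le_trans (oldstep c _ ih.2) ih.1, q0b _ ih.2⟩
    rw [← hk]
    exact (this k).1
  have all2 : ∀ (c : C) (v : ℕ), v < n → G.st 0 c = 2 → G.st v c = 2 := by
    intro c v hv h2
    have h1 := oldmono c v hv
    rw [h2] at h1
    have : (G.st v c : ℕ) < 3 := (G.st v c).isLt
    apply Fin.ext
    have h22 : ((2 : Fin 3) : ℕ) = 2 := rfl
    omega
  -- the shifted tree with a fresh all-zero root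
  set p' : ℕ → ℕ := fun v => if 1 < v ∧ v < N then G.parent (v-1) + 1 else 0 with hp'
  have p'lt : ∀ v, 0 < v → p' v < v := by
    intro v hv
    by_cases h : 1 < v ∧ v < N
    · simp only [hp', if_pos h]
      have := G.parent_lt (v-1) (by omega) (by omega)
      omega
    · simp only [hp', if_neg h]; exact hv
  have p'le : ∀ v, p' v ≤ v := by
    intro v
    rcases Nat.eq_zero_or_pos v with h | h
    · subst h; simp [hp']
    · exact le_of_lt (p'lt v h)
  have p'0 : p' 0 = 0 := by simp [hp']
  have p'N : ∀ v, p' v < N := by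
    intro v
    by_cases h : 1 < v ∧ v < N
    · exact lt_trans (p'lt v (by omega)) h.2
    · simp only [hp', if_neg h]; omega
  have p'eq : ∀ v, 1 < v → v < N → p' v = G.parent (v-1) + 1 := by
    intro v h1 h2; simp [hp', h1, h2]
  have p'1 : p' 1 = 0 := by simp [hp']
  set ST : ℕ → C → Fin 3 := fun v c =>
    if 0 < v ∧ v < N then (if G.st 0 c = 2 then 0 else G.st (v-1) c) else 0 with hST
  have ST0 : ∀ c, ST 0 c = 0 := by intro c; simp [hST]
  have STout : ∀ c v, ¬ (0 < v ∧ v < N) → ST v c = 0 := by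
    intro c v h; simp only [hST, if_neg h]
  have STin : ∀ c v, 0 < v → v < N → G.st 0 c ≠ 2 → ST v c = G.st (v-1) c := by
    intro c v h1 h2 h3
    simp only [hST, if_pos (And.intro h1 h2), if_neg h3]
  have STpatch : ∀ c v, G.st 0 c = 2 → ST v c = 0 := by
    intro c v h
    by_cases hv : 0 < v ∧ v < N
    · simp only [hST, if_pos hv, if_neg (not_not_intro h)]
      simp [h]
    · exact STout c v hv
  -- edge step on the shifted tree
  have EOK : ∀ (c : C) (v : ℕ),
      ((ST (p' v) c : ℕ) = (ST v c : ℕ)) ∨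
      ((ST (p' v) c : ℕ) = 0 ∧ (ST v c : ℕ) = 1) ∨
      ((ST (p' v) c : ℕ) = 1 ∧ (ST v c : ℕ) = 2) := by
    intro c v
    by_cases hpatch : G.st 0 c = 2
    · left; rw [STpatch c _ hpatch, STpatch c _ hpatch]
    by_cases hv : 0 < v ∧ v < N
    · rcases Nat.lt_or_ge 1 v with h1 | h1
      · -- 1 < v < N : a real old edge
        have hplt := G.parent_lt (v-1) (by omega) (by omega)
        rw [p'eq v h1 hv.2, STin c _ (by omega) (by omega) hpatch,
            STin c _ hv.1 hv.2 hpatch]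
        simp only [Nat.add_sub_cancel]
        rcases G.edge_ok c (v-1) (by omega) (by omega) with he | ⟨ha, hb⟩ | ⟨ha, hb⟩
        · left; rw [he]
        · right; left; rw [ha, hb]; exact ⟨rfl, rfl⟩
        · right; right; rw [ha, hb]; exact ⟨rfl, rfl⟩
      · -- v = 1 : the new edge from the fresh root
        have hv1 : v = 1 := by omega
        subst hv1
        rw [p'1, ST0, STin c 1 (by omega) hv.2 hpatch]
        have h3 : (G.st 0 c : ℕ) < 3 := (G.st 0 c).isLt
        have h2 : (G.st 0 c : ℕ) ≠ 2 := by
          intro hcon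
          exact hpatch (by apply Fin.ext; rw [hcon]; rfl)
        rcases Nat.lt_or_ge (G.st 0 c : ℕ) 1 with h | h
        · left; simp only [Nat.sub_self]; omega
        · right; left
          refine ⟨rfl, ?_⟩
          simp only [Nat.sub_self]
          omega
    · left
      rw [STout c v hv]
      have hp0 : p' v = 0 := by
        rcases Nat.eq_zero_or_pos v with h | h
        · subst h; exact p'0
        · simp only [hp']
          rw [if_neg]
          intro ⟨ha, hb⟩
          exact hv ⟨by omega, hb⟩
      rw [hp0, ST0]
  have STstep : ∀ (c : C) (v : ℕ), (ST (p' v) c : ℕ) ≤ (ST v c : ℕ) := by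
    intro c v
    rcases EOK c v with h | ⟨h1, h2⟩ | ⟨h1, h2⟩ <;> omega
  have STmono : ∀ (c : C) (a b : ℕ), AncRel p' a b → (ST a c : ℕ) ≤ (ST b c : ℕ) := by
    rintro c a b ⟨k, hk⟩
    subst hk
    induction k with
    | zero => simp
    | succ k ih =>
      rw [Function.iterate_succ_apply']
      exact le_trans (STstep c _) ih
  -- gains and losses
  have gainAbove : ∀ (c : C) (v : ℕ), v < N → 1 ≤ (ST v c : ℕ) →
      ∃ i, (0 < i ∧ i < N ∧ (ST (p' i) c : ℕ) = 0 ∧ (ST i c : ℕ) = 1) ∧ AncRel p' i v := by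
    intro c v
    induction v using Nat.strong_induction_on with
    | _ v ih =>
      intro hvN hv1
      have hv0 : 0 < v := by
        rcases Nat.eq_zero_or_pos v with h | h
        · exfalso; subst h; rw [ST0] at hv1; simp at hv1
        · exact h
      rcases EOK c v with he | ⟨ha, hb⟩ | ⟨ha, hb⟩
      · obtain ⟨i, hgi, hanc⟩ := ih (p' v) (p'lt v hv0) (p'N v) (by omega)
        exact ⟨i, hgi, anc_trans p' hanc (anc_parent p' v)⟩
      · exact ⟨v, ⟨hv0, hvN, ha, hb⟩, anc_rfl p' v⟩
      · obtain ⟨i, hgi, hanc⟩ := ih (p' v) (p'lt v hv0) (p'N v) (by omega)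
        exact ⟨i, hgi, anc_trans p' hanc (anc_parent p' v)⟩
  have lossAbove : ∀ (c : C) (v : ℕ), v < N → (ST v c : ℕ) = 2 →
      ∃ j, (0 < j ∧ j < N ∧ (ST (p' j) c : ℕ) = 1 ∧ (ST j c : ℕ) = 2) ∧ AncRel p' j v := by
    intro c v
    induction v using Nat.strong_induction_on with
    | _ v ih =>
      intro hvN hv2
      have hv0 : 0 < v := by
        rcases Nat.eq_zero_or_pos v with h | h
        · exfalso; subst h; rw [ST0] at hv2; simp at hv2
        · exact h
      rcases EOK c v with he | ⟨ha, hb⟩ | ⟨ha, hb⟩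
      · obtain ⟨j, hgj, hanc⟩ := ih (p' v) (p'lt v hv0) (p'N v) (by omega)
        exact ⟨j, hgj, anc_trans p' hanc (anc_parent p' v)⟩
      · omega
      · exact ⟨v, ⟨hv0, hvN, ha, hb⟩, anc_rfl p' v⟩
  -- a helper to force the connecting ancestor to be the endpoint
  have pick : ∀ (c : C) (qq : Fin 3) (u r : ℕ), AncRel G.parent r u →
      (∀ w, AncRel G.parent r w → AncRel G.parent w u → G.st w c = qq) →
      G.st (G.parent u) c ≠ qq → r = u := by
    rintro c qq u r ⟨k, hk⟩ hcl hne
    cases k with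
    | zero => simp only [Function.iterate_zero_apply] at hk; omega
    | succ k =>
      exfalso
      apply hne
      apply hcl (G.parent u)
      · exact ⟨k, by rw [← Function.iterate_succ_apply]; exact hk⟩
      · exact ⟨1, rfl⟩
  -- decoding of a gain in the shifted tree
  have gainDecode : ∀ (c : C) (i : ℕ),
      (0 < i ∧ i < N ∧ (ST (p' i) c : ℕ) = 0 ∧ (ST i c : ℕ) = 1) →
      (i = 1 ∧ (G.st 0 c : ℕ) = 1) ∨
      (2 ≤ i ∧ (G.st (i-1) c : ℕ) = 1 ∧ (G.st (G.parent (i-1)) c : ℕ) = 0) := by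
    intro c i ⟨hi0, hiN, hpst, hist⟩
    have hpatch : G.st 0 c ≠ 2 := by
      intro hcon
      rw [STpatch c i hcon] at hist
      simp at hist
    rcases Nat.lt_or_ge 1 i with h1 | h1
    · right
      refine ⟨h1, ?_, ?_⟩
      · rw [STin c i hi0 hiN hpatch] at hist; exact hist
      · have hplt := G.parent_lt (i-1) (by omega) (by omega)
        rw [p'eq i h1 hiN, STin c _ (by omega) (by omega) hpatch] at hpst
        simpa using hpst
    · left
      have : i = 1 := by omega
      subst this
      rw [STin c 1 hi0 hiN hpatch] at hist
      exact ⟨rfl, by simpa using hist⟩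
  have lossDecode : ∀ (c : C) (j : ℕ),
      (0 < j ∧ j < N ∧ (ST (p' j) c : ℕ) = 1 ∧ (ST j c : ℕ) = 2) →
      (2 ≤ j ∧ (G.st (j-1) c : ℕ) = 2 ∧ (G.st (G.parent (j-1)) c : ℕ) = 1) := by
    intro c j ⟨hj0, hjN, hpst, hjst⟩
    have hpatch : G.st 0 c ≠ 2 := by
      intro hcon
      rw [STpatch c j hcon] at hjst
      simp at hjst
    rcases Nat.lt_or_ge 1 j with h1 | h1
    · refine ⟨h1, ?_, ?_⟩
      · rw [STin c j hj0 hjN hpatch] at hjst; exact hjst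
      · have hplt := G.parent_lt (j-1) (by omega) (by omega)
        rw [p'eq j h1 hjN, STin c _ (by omega) (by omega) hpatch] at hpst
        simpa using hpst
    · exfalso
      have : j = 1 := by omega
      subst this
      rw [p'1, ST0] at hpst
      simp at hpst
  have finv : ∀ (a : Fin 3) (k : ℕ), (a : ℕ) = k → a = (⟨k % 3, Nat.mod_lt k (by omega)⟩ : Fin 3) := by
    intro a k h
    apply Fin.ext
    simp only [← h]
    omega
  have gain_unique : ∀ (c : C) (i1 i2 : ℕ),
      (0 < i1 ∧ i1 < N ∧ (ST (p' i1) c : ℕ) = 0 ∧ (ST i1 c : ℕ) = 1) →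
      (0 < i2 ∧ i2 < N ∧ (ST (p' i2) c : ℕ) = 0 ∧ (ST i2 c : ℕ) = 1) →
      i1 = i2 := by
    intro c i1 i2 hg1 hg2
    have hd1 := gainDecode c i1 hg1
    have hd2 := gainDecode c i2 hg2
    rcases hd1 with ⟨he1, hs1⟩ | ⟨he1, hs1, hps1⟩ <;>
      rcases hd2 with ⟨he2, hs2⟩ | ⟨he2, hs2, hps2⟩
    · rw [he1, he2]
    · exfalso
      have hpn : G.parent (i2-1) < n := by
        have := G.parent_lt (i2-1) (by omega) (by omega)
        omega
      have := oldmono c (G.parent (i2-1)) hpn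
      omega
    · exfalso
      have hpn : G.parent (i1-1) < n := by
        have := G.parent_lt (i1-1) (by omega) (by omega)
        omega
      have := oldmono c (G.parent (i1-1)) hpn
      omega
    · have hu1 : G.st (i1-1) c = 1 := by
        apply Fin.ext; rw [hs1]; rfl
      have hu2 : G.st (i2-1) c = 1 := by
        apply Fin.ext; rw [hs2]; rfl
      obtain ⟨r, hrn, hrq, hr1, hr2, hcl1, hcl2⟩ :=
        G.state_connected c 1 (i1-1) (i2-1) (by omega) (by omega) hu1 hu2
      have e1 : r = i1 - 1 := by
        apply pick c 1 (i1-1) r hr1 hcl1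
        intro hcon
        have : (G.st (G.parent (i1-1)) c : ℕ) = 1 := by rw [hcon]; rfl
        omega
      have e2 : r = i2 - 1 := by
        apply pick c 1 (i2-1) r hr2 hcl2
        intro hcon
        have : (G.st (G.parent (i2-1)) c : ℕ) = 1 := by rw [hcon]; rfl
        omega
      omega
  have loss_unique : ∀ (c : C) (j1 j2 : ℕ),
      (0 < j1 ∧ j1 < N ∧ (ST (p' j1) c : ℕ) = 1 ∧ (ST j1 c : ℕ) = 2) →
      (0 < j2 ∧ j2 < N ∧ (ST (p' j2) c : ℕ) = 1 ∧ (ST j2 c : ℕ) = 2) →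
      j1 = j2 := by
    intro c j1 j2 hg1 hg2
    obtain ⟨he1, hs1, hps1⟩ := lossDecode c j1 hg1
    obtain ⟨he2, hs2, hps2⟩ := lossDecode c j2 hg2
    have hu1 : G.st (j1-1) c = 2 := by
      apply Fin.ext; rw [hs1]; rfl
    have hu2 : G.st (j2-1) c = 2 := by
      apply Fin.ext; rw [hs2]; rfl
    obtain ⟨r, hrn, hrq, hr1, hr2, hcl1, hcl2⟩ :=
      G.state_connected c 2 (j1-1) (j2-1) (by omega) (by omega) hu1 hu2
    have e1 : r = j1 - 1 := by
      apply pick c 2 (j1-1) r hr1 hcl1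
      intro hcon
      have : (G.st (G.parent (j1-1)) c : ℕ) = 2 := by rw [hcon]; rfl
      omega
    have e2 : r = j2 - 1 := by
      apply pick c 2 (j2-1) r hr2 hcl2
      intro hcon
      have : (G.st (G.parent (j2-1)) c : ℕ) = 2 := by rw [hcon]; rfl
      omega
    omega
  -- labels on the shifted tree
  set lab : ℕ → C → Bool := fun v c => decide ((ST v c : ℕ) = 1) with hlab
  have lab_true : ∀ v c, lab v c = true ↔ (ST v c : ℕ) = 1 := by
    intro v c; simp [hlab]
  have lab_false : ∀ v c, lab v c = false ↔ (ST v c : ℕ) ≠ 1 := by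
    intro v c; simp [hlab]
  have classify : ∀ (c : C) (x : ℕ), lab (p' x) c ≠ lab x c →
      (0 < x ∧ x < N) ∧
      (((ST (p' x) c : ℕ) = 0 ∧ (ST x c : ℕ) = 1) ∨
       ((ST (p' x) c : ℕ) = 1 ∧ (ST x c : ℕ) = 2)) := by
    intro c x hch
    have hlabeq : (ST (p' x) c : ℕ) = (ST x c : ℕ) → False := by
      intro he
      apply hch
      rcases Bool.eq_false_or_eq_true (lab x c) with h | h
      · rw [h]; rw [lab_true] at h ⊢; omega
      · rw [h]; rw [lab_false] at h ⊢; omega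
    constructor
    · by_contra hcon
      apply hlabeq
      rw [STout c x hcon]
      have hp0 : p' x = 0 := by
        rcases Nat.eq_zero_or_pos x with h | h
        · subst h; exact p'0
        · simp only [hp']
          rw [if_neg]
          intro ⟨ha, hb⟩
          exact hcon ⟨by omega, hb⟩
      rw [hp0, ST0]
    · rcases EOK c x with he | h | h
      · exact absurd he hlabeq
      · exact Or.inl h
      · exact Or.inr h
  have gain_change : ∀ (c : C) (x : ℕ),
      (ST (p' x) c : ℕ) = 0 → (ST x c : ℕ) = 1 → lab (p' x) c ≠ lab x c := by
    intro c x h0 h1 hcon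
    have ha : lab x c = true := (lab_true x c).mpr h1
    rw [ha] at hcon
    rw [lab_true] at hcon
    omega
  have loss_change : ∀ (c : C) (x : ℕ),
      (ST (p' x) c : ℕ) = 1 → (ST x c : ℕ) = 2 → lab (p' x) c ≠ lab x c := by
    intro c x h0 h1 hcon
    have ha : lab x c = false := (lab_false x c).mpr (by omega)
    rw [ha] at hcon
    rw [lab_false] at hcon
    omega
  -- canonical representatives of label classes
  set labv : ℕ → (C → Bool) := fun v c => lab v c with hlabv
  have exlab : ∀ v : ℕ, ∃ y, labv y = labv v := fun v => ⟨v, rfl⟩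
  set π : ℕ → ℕ := fun v => Nat.find (exlab v) with hπ
  have π_spec : ∀ v, labv (π v) = labv v := fun v => Nat.find_spec (exlab v)
  have π_min : ∀ v y, labv y = labv v → π v ≤ y := fun v y h => Nat.find_min' (exlab v) h
  have π_le : ∀ v, π v ≤ v := fun v => π_min v v rfl
  have π_congr : ∀ a b, labv a = labv b → π a = π b := by
    intro a b h
    apply le_antisymm
    · exact π_min a (π b) ((π_spec b).trans h.symm)
    · exact π_min b (π a) ((π_spec a).trans h)
  have π_idem : ∀ v, π (π v) = π v := fun v => π_congr (π v) v (π_spec v)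
  have π0 : π 0 = 0 := Nat.le_zero.mp (π_le 0)
  have lab_π : ∀ v c, lab (π v) c = lab v c := by
    intro v c
    have := π_spec v
    exact congrFun this c
  have gain_is_rep : ∀ (c : C) (i : ℕ),
      (0 < i ∧ i < N ∧ (ST (p' i) c : ℕ) = 0 ∧ (ST i c : ℕ) = 1) → π i = i := by
    intro c i hg
    refine le_antisymm (π_le i) ?_
    set y := π i with hy
    have h1 : lab y c = true := by
      rw [lab_π]
      exact (lab_true i c).mpr hg.2.2.2
    have h2 : (ST y c : ℕ) = 1 := (lab_true y c).mp h1
    have hyN : y < N := lt_of_le_of_lt (π_le i) hg.2.1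
    obtain ⟨i', hgi', hanc⟩ := gainAbove c y hyN (by omega)
    have : i' = i := gain_unique c i' i hgi' hg
    subst this
    exact anc_le p' p'le hanc
  -- the set of representatives and the re-indexing
  set R : Finset ℕ := (Finset.range N).filter (fun v => π v = v) with hRdef
  have hR : ∀ v, v ∈ R ↔ v < N ∧ π v = v := by
    intro v; simp [hRdef, Finset.mem_filter, Finset.mem_range]
  have h0R : (0 : ℕ) ∈ R := (hR 0).mpr ⟨by omega, π0⟩
  set m := R.card with hm'
  have hm : 0 < m := Finset.card_pos.mpr ⟨0, h0R⟩
  set e := R.orderIsoOfFin rfl with he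
  set ofIdx : ℕ → ℕ := fun x => if h : x < m then ((e ⟨x, h⟩ : {v // v ∈ R}) : ℕ) else 0
    with hofIdx
  set toIdx : ℕ → ℕ := fun v => if h : v ∈ R then ((e.symm ⟨v, h⟩ : Fin m) : ℕ) else 0
    with htoIdx
  have ofIdx_mem : ∀ x, ofIdx x ∈ R := by
    intro x
    by_cases h : x < m
    · simp only [hofIdx, dif_pos h]; exact (e ⟨x, h⟩).2
    · simp only [hofIdx, dif_neg h]; exact h0R
  have ofIdx_ltN : ∀ x, ofIdx x < N := fun x => ((hR _).mp (ofIdx_mem x)).1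
  have ofIdx_rep : ∀ x, π (ofIdx x) = ofIdx x := fun x => ((hR _).mp (ofIdx_mem x)).2
  have toIdx_lt : ∀ v, v ∈ R → toIdx v < m := by
    intro v h
    simp only [htoIdx, dif_pos h]
    exact (e.symm ⟨v, h⟩).isLt
  have toIdx_ofIdx : ∀ x, x < m → toIdx (ofIdx x) = x := by
    intro x hx
    have hmem : ((e ⟨x, hx⟩ : {v // v ∈ R}) : ℕ) ∈ R := (e ⟨x, hx⟩).2
    simp only [hofIdx, dif_pos hx, htoIdx, dif_pos hmem]
    have h1 : (⟨((e ⟨x, hx⟩ : {v // v ∈ R}) : ℕ), hmem⟩ : {v // v ∈ R}) = e ⟨x, hx⟩ :=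
      Subtype.ext rfl
    rw [h1, OrderIso.symm_apply_apply]
  have ofIdx_toIdx : ∀ v, v ∈ R → ofIdx (toIdx v) = v := by
    intro v hv
    have hlt : ((e.symm ⟨v, hv⟩ : Fin m) : ℕ) < m := (e.symm ⟨v, hv⟩).isLt
    simp only [htoIdx, dif_pos hv, hofIdx, dif_pos hlt]
    have h1 : (⟨((e.symm ⟨v, hv⟩ : Fin m) : ℕ), hlt⟩ : Fin m) = e.symm ⟨v, hv⟩ :=
      Fin.ext rfl
    rw [h1, OrderIso.apply_symm_apply]
  have toIdx_mono : ∀ a b, a ∈ R → b ∈ R → a < b → toIdx a < toIdx b := by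
    intro a b ha hb hab
    simp only [htoIdx, dif_pos ha, dif_pos hb]
    have : (⟨a, ha⟩ : {v // v ∈ R}) < ⟨b, hb⟩ := by exact_mod_cast hab
    have h2 : e.symm ⟨a, ha⟩ < e.symm ⟨b, hb⟩ := by
      rw [OrderIso.lt_iff_lt]
      exact this
    exact_mod_cast h2
  have ofIdx0 : ofIdx 0 = 0 := by
    have h1 : toIdx 0 < m := toIdx_lt 0 h0R
    have h2 : ofIdx (toIdx 0) = 0 := ofIdx_toIdx 0 h0R
    have h3 : ofIdx 0 ≤ ofIdx (toIdx 0) := by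
      rcases Nat.eq_zero_or_pos (toIdx 0) with h | h
      · rw [h]
      · have := ofIdx_mem 0
        simp only [hofIdx, dif_pos hm, dif_pos h1]
        have hle1 : (⟨0, hm⟩ : Fin m) ≤ ⟨toIdx 0, h1⟩ := by
          exact Fin.mk_le_mk.mpr (Nat.zero_le _)
        have := e.le_iff_le.mpr hle1
        exact_mod_cast this
    omega
  have toIdx0 : toIdx 0 = 0 := by
    have := toIdx_ofIdx 0 hm
    rw [ofIdx0] at this
    exact this
  have eqIdx : ∀ x y, x < m → y < m → ofIdx x = ofIdx y → x = y := by
    intro x y hx hy h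
    rw [← toIdx_ofIdx x hx, ← toIdx_ofIdx y hy, h]
  -- the representative parent map
  set pr : ℕ → ℕ := fun v => π (p' v) with hpr
  have prR : ∀ v, v ∈ R → pr v ∈ R := by
    intro v hv
    refine (hR _).mpr ⟨?_, π_idem _⟩
    exact lt_of_le_of_lt (π_le _) (p'N v)
  have pr0 : pr 0 = 0 := by simp only [hpr, p'0, π0]
  set parentF : ℕ → ℕ := fun x => toIdx (pr (ofIdx x)) with hparentF
  set labelF : ℕ → C → Bool := fun x c => lab (ofIdx x) c with hlabelF
  have parentF_comm : ∀ v, v ∈ R → parentF (toIdx v) = toIdx (pr v) := by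
    intro v hv
    simp only [hparentF, ofIdx_toIdx v hv]
  have iterF : ∀ (k : ℕ) (v : ℕ), v ∈ R →
      parentF^[k] (toIdx v) = toIdx (pr^[k] v) ∧ pr^[k] v ∈ R := by
    intro k
    induction k with
    | zero => intro v hv; exact ⟨rfl, hv⟩
    | succ k ih =>
      intro v hv
      rw [Function.iterate_succ_apply, Function.iterate_succ_apply, parentF_comm v hv]
      exact ih (pr v) (prR v hv)
  have ancF : ∀ a b, a ∈ R → b ∈ R → AncRel pr a b →
      AncRel parentF (toIdx a) (toIdx b) := by
    rintro a b ha hb ⟨k, hk⟩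
    exact ⟨k, ((iterF k b hb).1).trans (congrArg toIdx hk)⟩
  have parentF_lt : ∀ x, 0 < x → x < m → parentF x < x := by
    intro x hx0 hxm
    set v := ofIdx x with hv
    have hvR : v ∈ R := ofIdx_mem x
    have hv0 : 0 < v := by
      rcases Nat.eq_zero_or_pos v with h | h
      · exfalso
        have : toIdx v = x := toIdx_ofIdx x hxm
        rw [h, toIdx0] at this
        omega
      · exact h
    have h1 : pr v < v := lt_of_le_of_lt (π_le _) (p'lt v hv0)
    have h2 : toIdx (pr v) < toIdx v := toIdx_mono _ _ (prR v hvR) hvR h1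
    rw [toIdx_ofIdx x hxm] at h2
    exact h2
  have labP : ∀ x c, labelF (parentF x) c = lab (p' (ofIdx x)) c := by
    intro x c
    have h1 : pr (ofIdx x) ∈ R := prR _ (ofIdx_mem x)
    simp only [hlabelF, hparentF, ofIdx_toIdx _ h1, hpr]
    exact (congrArg (fun v => lab v c) (ofIdx_toIdx _ h1)).trans (lab_π _ c)
  -- changes in the final tree are exactly changes at representatives
  have chgF : ∀ (c : C) (x : ℕ), x < m →
      (labelF (parentF x) c ≠ labelF x c ↔ lab (p' (ofIdx x)) c ≠ lab (ofIdx x) c) := by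
    intro c x hxm
    rw [labP x c]
  -- the key path lemma
  have LemQ : ∀ (c : C) (i : ℕ),
      (0 < i ∧ i < N ∧ (ST (p' i) c : ℕ) = 0 ∧ (ST i c : ℕ) = 1) →
      ∀ x, x ∈ R → (ST x c : ℕ) = 1 → AncRel pr i x := by
    intro c i hg x
    induction x using Nat.strong_induction_on with
    | _ x ih =>
      intro hxR hx1
      by_cases hxi : x = i
      · subst hxi; exact anc_rfl pr x
      have hx0 : 0 < x := by
        rcases Nat.eq_zero_or_pos x with h | h
        · exfalso; subst h; rw [ST0] at hx1; simp at hx1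
        · exact h
      have hxN : x < N := ((hR x).mp hxR).1
      rcases EOK c x with he | ⟨ha, hb⟩ | ⟨ha, hb⟩
      · -- no state change on the edge into x
        set y := pr x with hy
        have hyR : pr x ∈ R := prR x hxR
        have hy1 : (ST y c : ℕ) = 1 := by
          apply (lab_true y c).mp
          rw [hy, hpr, lab_π]
          exact (lab_true (p' x) c).mpr (by omega)
        have hylt : y < x := lt_of_le_of_lt (π_le _) (p'lt x hx0)
        have h1 : AncRel pr i y := ih y hylt hyR hy1
        exact anc_trans pr h1 ⟨1, rfl⟩
      · -- a gain edge into x: then x = i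
        exact absurd (gain_unique c x i ⟨hx0, hxN, ha, hb⟩ hg) hxi
      · omega
  -- final verification
  refine ⟨{ n := m, n_pos := hm, parent := parentF, parent_lt := parentF_lt,
            label := labelF,
            root_label := ?_, changes_le_two := ?_, changes_on_path := ?_,
            single_change_gain := ?_, rows_label := ?_ }⟩
  · intro c
    simp only [hlabelF, ofIdx0]
    rw [lab_false, ST0 c]
    simp
  · -- changes_le_two
    intro c i j k hi hj hk
    obtain ⟨hi0, him, hic⟩ := hi
    obtain ⟨hj0, hjm, hjc⟩ := hj
    obtain ⟨hk0, hkm, hkc⟩ := hk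
    have ci := classify c (ofIdx i) ((chgF c i him).mp hic)
    have cj := classify c (ofIdx j) ((chgF c j hjm).mp hjc)
    have ck := classify c (ofIdx k) ((chgF c k hkm).mp hkc)
    obtain ⟨hbi, ci⟩ := ci
    obtain ⟨hbj, cj⟩ := cj
    obtain ⟨hbk, ck⟩ := ck
    rcases ci with gi | li <;> rcases cj with gj | lj <;> rcases ck with gk | lk
    · exact Or.inl (eqIdx i j him hjm
        (gain_unique c _ _ ⟨hbi.1, hbi.2, gi.1, gi.2⟩ ⟨hbj.1, hbj.2, gj.1, gj.2⟩))
    · exact Or.inl (eqIdx i j him hjm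
        (gain_unique c _ _ ⟨hbi.1, hbi.2, gi.1, gi.2⟩ ⟨hbj.1, hbj.2, gj.1, gj.2⟩))
    · exact Or.inr (Or.inl (eqIdx i k him hkm
        (gain_unique c _ _ ⟨hbi.1, hbi.2, gi.1, gi.2⟩ ⟨hbk.1, hbk.2, gk.1, gk.2⟩)))
    · exact Or.inr (Or.inr (eqIdx j k hjm hkm
        (loss_unique c _ _ ⟨hbj.1, hbj.2, lj.1, lj.2⟩ ⟨hbk.1, hbk.2, lk.1, lk.2⟩)))
    · exact Or.inr (Or.inr (eqIdx j k hjm hkm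
        (gain_unique c _ _ ⟨hbj.1, hbj.2, gj.1, gj.2⟩ ⟨hbk.1, hbk.2, gk.1, gk.2⟩)))
    · exact Or.inr (Or.inl (eqIdx i k him hkm
        (loss_unique c _ _ ⟨hbi.1, hbi.2, li.1, li.2⟩ ⟨hbk.1, hbk.2, lk.1, lk.2⟩)))
    · exact Or.inl (eqIdx i j him hjm
        (loss_unique c _ _ ⟨hbi.1, hbi.2, li.1, li.2⟩ ⟨hbj.1, hbj.2, lj.1, lj.2⟩))
    · exact Or.inl (eqIdx i j him hjm
        (loss_unique c _ _ ⟨hbi.1, hbi.2, li.1, li.2⟩ ⟨hbj.1, hbj.2, lj.1, lj.2⟩))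
  · -- changes_on_path
    intro c i j hi hj hij
    obtain ⟨hi0, him, hic⟩ := hi
    obtain ⟨hj0, hjm, hjc⟩ := hj
    obtain ⟨hbi, ci⟩ := classify c (ofIdx i) ((chgF c i him).mp hic)
    obtain ⟨hbj, cj⟩ := classify c (ofIdx j) ((chgF c j hjm).mp hjc)
    have main : ∀ a b : ℕ, a < m → b < m →
        ((ST (p' (ofIdx a)) c : ℕ) = 0 ∧ (ST (ofIdx a) c : ℕ) = 1) →
        (0 < ofIdx a ∧ ofIdx a < N) →
        ((ST (p' (ofIdx b)) c : ℕ) = 1 ∧ (ST (ofIdx b) c : ℕ) = 2) →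
        (0 < ofIdx b ∧ ofIdx b < N) →
        AncRel parentF a b ∧ labelF (parentF a) c = false ∧ labelF a c = true ∧
          labelF (parentF b) c = true ∧ labelF b c = false := by
      intro a b ham hbm ga hba lb hbb
      have hgainA : 0 < ofIdx a ∧ ofIdx a < N ∧ (ST (p' (ofIdx a)) c : ℕ) = 0 ∧
          (ST (ofIdx a) c : ℕ) = 1 := ⟨hba.1, hba.2, ga.1, ga.2⟩
      have hanc : AncRel pr (ofIdx a) (ofIdx b) := by
        have hyR : pr (ofIdx b) ∈ R := prR _ (ofIdx_mem b)
        have hy1 : (ST (pr (ofIdx b)) c : ℕ) = 1 := by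
          apply (lab_true _ c).mp
          rw [hpr, lab_π]
          exact (lab_true (p' (ofIdx b)) c).mpr lb.1
        have h1 : AncRel pr (ofIdx a) (pr (ofIdx b)) := LemQ c (ofIdx a) hgainA _ hyR hy1
        exact anc_trans pr h1 ⟨1, rfl⟩
      have hancF : AncRel parentF a b := by
        have := ancF _ _ (ofIdx_mem a) (ofIdx_mem b) hanc
        rwa [toIdx_ofIdx a ham, toIdx_ofIdx b hbm] at this
      refine ⟨hancF, ?_, ?_, ?_, ?_⟩
      · rw [labP]; rw [lab_false]; omega
      · simp only [hlabelF]; rw [lab_true]; exact ga.2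
      · rw [labP]; rw [lab_true]; exact lb.1
      · simp only [hlabelF]; rw [lab_false]; omega
    rcases ci with gi | li
    · rcases cj with gj | lj
      · exact absurd (eqIdx i j him hjm
          (gain_unique c _ _ ⟨hbi.1, hbi.2, gi.1, gi.2⟩ ⟨hbj.1, hbj.2, gj.1, gj.2⟩)) hij
      · exact Or.inl (main i j him hjm gi hbi lj hbj)
    · rcases cj with gj | lj
      · exact Or.inr (main j i hjm him gj hbj li hbi)
      · exact absurd (eqIdx i j him hjm
          (loss_unique c _ _ ⟨hbi.1, hbi.2, li.1, li.2⟩ ⟨hbj.1, hbj.2, lj.1, lj.2⟩)) hij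
  · -- single_change_gain
    intro c i hi huniq
    obtain ⟨hi0, him, hic⟩ := hi
    obtain ⟨hbi, ci⟩ := classify c (ofIdx i) ((chgF c i him).mp hic)
    rcases ci with gi | li
    · constructor
      · rw [labP]; rw [lab_false]; omega
      · simp only [hlabelF]; rw [lab_true]; exact gi.2
    · exfalso
      obtain ⟨g0, hg0, hanc⟩ := gainAbove c (p' (ofIdx i)) (p'N _) (by omega)
      have hg0rep : π g0 = g0 := gain_is_rep c g0 hg0
      have hg0R : g0 ∈ R := (hR g0).mpr ⟨hg0.2.1, hg0rep⟩
      set x0 := toIdx g0 with hx0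
      have hx0m : x0 < m := toIdx_lt g0 hg0R
      have hofx0 : ofIdx x0 = g0 := ofIdx_toIdx g0 hg0R
      have hx0pos : 0 < x0 := by
        rcases Nat.eq_zero_or_pos x0 with h | h
        · exfalso
          have := hofx0
          rw [h, ofIdx0] at this
          omega
        · exact h
      have hchg : labelF (parentF x0) c ≠ labelF x0 c := by
        rw [chgF c x0 hx0m, hofx0]
        exact gain_change c g0 hg0.2.2.1 hg0.2.2.2
      have := huniq x0 ⟨hx0pos, hx0m, hchg⟩
      have hgv : g0 = ofIdx i := by rw [← hofx0, this]
      have h1 : (ST g0 c : ℕ) = 1 := hg0.2.2.2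
      rw [hgv] at h1
      omega
  · -- rows_label
    intro s
    obtain ⟨u, hun, hα⟩ := G.species_node s
    set v0 := u + 1 with hv0
    have hv0N : v0 < N := by omega
    have hlabrow : ∀ c, lab v0 c = M s c := by
      intro c
      have hin := hα c
      simp only [Set.mem_setOf_eq] at hin
      rcases hin with ⟨hMt, hq⟩ | ⟨hMf, hq⟩
      · rw [hMt]
        apply (lab_true v0 c).mpr
        have hpatch : G.st 0 c ≠ 2 := by
          intro hcon
          have := all2 c u hun hcon
          rw [hq] at this
          exact absurd (congrArg Fin.val this) (by decide)
        rw [STin c v0 (by omega) hv0N hpatch]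
        simp only [hv0, Nat.add_sub_cancel]
        rw [hq]
        rfl
      · rw [hMf]
        apply (lab_false v0 c).mpr
        by_cases hpatch : G.st 0 c = 2
        · rw [STpatch c v0 hpatch]; simp
        · rw [STin c v0 (by omega) hv0N hpatch]
          simp only [hv0, Nat.add_sub_cancel]
          rcases hq with hq | hq <;> rw [hq] <;> simp
    have hπR : π v0 ∈ R := (hR _).mpr ⟨lt_of_le_of_lt (π_le v0) hv0N, π_idem v0⟩
    refine ⟨toIdx (π v0), ⟨toIdx_lt _ hπR, ?_⟩, ?_⟩
    · intro c
      simp only [hlabelF, ofIdx_toIdx _ hπR]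
      rw [lab_π]
      exact hlabrow c
    · intro y ⟨hym, hylab⟩
      have hwR : ofIdx y ∈ R := ofIdx_mem y
      have hlveq : labv (ofIdx y) = labv v0 := by
        funext c
        have h1 : lab (ofIdx y) c = M s c := by
          have := hylab c
          simpa only [hlabelF] using this
        rw [hlabv]
        simp only
        rw [h1, hlabrow c]
      have h2 : π (ofIdx y) = π v0 := π_congr _ _ hlveq
      have h3 : ofIdx y = π v0 := by
        rw [← ofIdx_rep y, h2]
      rw [← toIdx_ofIdx y hym, h3]

end Bwd

/-- `M` admits a persistent perfect phylogeny iff the General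
Character Compatibility instance with `α_c(s) = {1}` when `M s c = 1` and
`α_c(s) = {0,2}` when `M s c = 0` (all character trees `0 → 1 → 2`) admits a
solution. -/
theorem stmt11 {S C : Type*} [Fintype S] [Fintype C] (M : S → C → Bool) :
    Nonempty (PPTree S C M) ↔
    Nonempty (GCCSolution S C (fun c s =>
      {q : Fin 3 | (M s c = true ∧ q = 1) ∨
        (M s c = false ∧ (q = 0 ∨ q = 2))})) := by
  constructor
  · rintro ⟨T⟩
    exact fwdThm M T
  · rintro ⟨G⟩
    exact bwdThm M G
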